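/- arXiv:1411.3869 — 3 statements merged into one kernel-verified Lean document; each statement's English description precedes it below -/
import Mathlib

section
/- Let z₀, z₁, z₂ ∈ ℂ be pairwise distinct and all nonzero with z₀ + z₁ + z₂ = 0, and suppose the three moduli |z₀|, |z₁|, |z₂| are not all equal. Then the maximal distance from a vertex to the centroid strictly decreases under the triangle transformation: max_{i=0,1,2} |z′ᵢ| < max_{i=0,1,2} |zᵢ|. -/
/-- The ratio `rᵢ = |z_{i-1}| / |z_i|` of distances from the vertices to the
centroid (assumed to be the origin). -/
noncomputable def triRatio (z : ZMod 3 → ℂ) (i : ZMod 3) : ℝ :=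
  ‖z (i - 1)‖ / ‖z i‖

/-- One step of the triangle transformation (centroid at the origin):
`z′ᵢ = (2/3) rᵢ zᵢ − (1/3) r_{i+1} z_{i+1} − (1/3) r_{i+2} z_{i+2}`. -/
noncomputable def triStep (z : ZMod 3 → ℂ) (i : ZMod 3) : ℂ :=
  (2 / 3 : ℂ) * (triRatio z i : ℝ) * z i
    - (1 / 3 : ℂ) * (triRatio z (i + 1) : ℝ) * z (i + 1)
    - (1 / 3 : ℂ) * (triRatio z (i + 2) : ℝ) * z (i + 2)

set_option maxHeartbeats 1000000 in
lemma scalar_key (a b c M : ℝ) (ha : 0 < a) (hb : 0 < b) (hc : 0 < c)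
    (t2 : a ≤ b + c) (t3 : b ≤ a + c) (t1 : c ≤ a + b)
    (hMa : a ≤ M) (hMb : b ≤ M) (hMc : c ≤ M)
    (hMeq : M = a ∨ M = b ∨ M = c)
    (hne : ¬(a = b ∧ b = c)) :
    a*b*(2*c^2+a*b)^2 + a*b*(b^2-a*c)^2 + (2*c^2+a*b)*(b^2-a*c)*(c^2-a^2-b^2)
      < 9*M^2*(a*b*c^2) := by
  rcases hMeq with h | h | h
  all_goals rw [h] at hMa hMb hMc ⊢
  · -- M = a
    rcases lt_or_eq_of_le hMc with hlt | heq
    · nlinarith [mul_nonneg (mul_nonneg (mul_nonneg (mul_nonneg (mul_nonneg ha.le ha.le) hb.le) hc.le) (by linarith : (0:ℝ) ≤ b+c-a)) (by linarith : (0:ℝ) ≤ a-c),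
        mul_nonneg (mul_nonneg (mul_nonneg ha.le ha.le) (mul_nonneg hc.le hc.le)) (sq_nonneg (a-c)),
        mul_pos (mul_pos (mul_pos (mul_pos (mul_pos ha hb) hb) hc) hc) (by linarith : (0:ℝ) < a-c),
        mul_nonneg (mul_nonneg (mul_nonneg (mul_nonneg (mul_nonneg ha.le hb.le) hb.le) hc.le) (by linarith : (0:ℝ) ≤ b+c-a)) (by linarith : (0:ℝ) ≤ a-c),
        mul_nonneg (mul_nonneg (mul_nonneg (mul_nonneg ha.le hb.le) hc.le) (mul_nonneg (by linarith : (0:ℝ) ≤ b+c-a) (by linarith : (0:ℝ) ≤ b+c-a))) (by linarith : (0:ℝ) ≤ a-c),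
        mul_nonneg (mul_nonneg (mul_nonneg (mul_nonneg ha.le hb.le) hc.le) (by linarith : (0:ℝ) ≤ b+c-a)) (sq_nonneg (a-b)),
        mul_nonneg (mul_nonneg (mul_nonneg ha.le (mul_nonneg hc.le hc.le)) (by linarith : (0:ℝ) ≤ b+c-a)) (sq_nonneg (a-b)),
        mul_nonneg (mul_nonneg (mul_nonneg ha.le (mul_nonneg hc.le hc.le)) (by linarith : (0:ℝ) ≤ a+c-b)) (sq_nonneg (a-c)),
        mul_nonneg (mul_nonneg (mul_nonneg (mul_nonneg (mul_nonneg hb.le hb.le) hb.le) hc.le) (by linarith : (0:ℝ) ≤ a-b)) (by linarith : (0:ℝ) ≤ a-c),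
        mul_nonneg (mul_nonneg (mul_nonneg (mul_nonneg hb.le hb.le) hc.le) (mul_nonneg hc.le hc.le)) (by linarith : (0:ℝ) ≤ a-c)]
    · -- c = a
      have hab : a ≠ b := by rintro rfl; exact hne ⟨rfl, by linarith⟩
      have h2 : 0 < (a-b)^2 := by have := sub_ne_zero.2 hab; positivity
      rw [heq]
      nlinarith [mul_pos (mul_pos (mul_pos (mul_pos ha ha) hb) hb) h2,
        mul_pos (mul_pos (mul_pos (mul_pos ha ha) ha) hb) h2]
  · -- M = b
    rcases lt_or_eq_of_le hMa with hlt | heq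
    · nlinarith [mul_pos (mul_pos (mul_pos (mul_pos (mul_pos ha ha) ha) hb) hc) (by linarith : (0:ℝ) < b-a),
        mul_nonneg (mul_nonneg (mul_nonneg (mul_nonneg (mul_nonneg ha.le ha.le) hb.le) hb.le) hc.le) (by linarith : (0:ℝ) ≤ b-a),
        mul_nonneg (mul_nonneg (mul_nonneg ha.le ha.le) (mul_nonneg (mul_nonneg hc.le hc.le) hc.le)) (by linarith : (0:ℝ) ≤ b-a),
        mul_nonneg (mul_nonneg (mul_nonneg ha.le ha.le) (mul_nonneg hc.le hc.le)) (sq_nonneg (b-c)),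
        mul_nonneg (mul_nonneg (mul_nonneg (mul_nonneg (mul_nonneg ha.le hb.le) hb.le) hc.le) hc.le) (by linarith : (0:ℝ) ≤ b-a),
        mul_nonneg (mul_nonneg (mul_nonneg (mul_nonneg (mul_nonneg ha.le hb.le) hb.le) hc.le) hc.le) (by linarith : (0:ℝ) ≤ b-c),
        mul_nonneg (mul_nonneg (mul_nonneg (mul_nonneg ha.le hb.le) (mul_nonneg hc.le hc.le)) (by linarith : (0:ℝ) ≤ a+b-c)) (by linarith : (0:ℝ) ≤ b-a),
        mul_nonneg (mul_nonneg (mul_nonneg ha.le (mul_nonneg (mul_nonneg hc.le hc.le) hc.le)) (by linarith : (0:ℝ) ≤ a+b-c)) (by linarith : (0:ℝ) ≤ b-c),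
        mul_nonneg (mul_nonneg (mul_nonneg (mul_nonneg hb.le hb.le) hb.le) (mul_nonneg hc.le hc.le)) (by linarith : (0:ℝ) ≤ b-c),
        mul_nonneg (mul_nonneg (mul_nonneg hb.le hb.le) (mul_nonneg (mul_nonneg hc.le hc.le) hc.le)) (by linarith : (0:ℝ) ≤ b-c)]
    · -- a = b
      have hbc : b ≠ c := fun h' => hne ⟨heq, h'⟩
      have hcb : c < b := lt_of_le_of_ne hMc (fun h' => hbc h'.symm)
      rw [heq]
      nlinarith [mul_nonneg (mul_nonneg (mul_nonneg hb.le hb.le) (mul_nonneg hc.le hc.le)) (sq_nonneg (b-c)),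
        mul_pos (mul_pos (mul_pos (mul_pos (mul_pos hb hb) hb) hc) hc) (by linarith : (0:ℝ) < b-c),
        mul_pos (mul_pos (mul_pos hb (mul_pos hc (mul_pos hc hc))) (by linarith : (0:ℝ) < 2*b-c)) (by linarith : (0:ℝ) < b-c),
        mul_pos (mul_pos (mul_pos hb hb) (mul_pos hc (mul_pos hc hc))) (by linarith : (0:ℝ) < b-c)]
  · -- M = c
    rcases lt_or_eq_of_le hMa with hlt | heq
    · nlinarith [mul_nonneg (mul_nonneg (mul_nonneg (mul_nonneg ha.le ha.le) ha.le) hb.le) (mul_nonneg (by linarith : (0:ℝ) ≤ c-a) (by linarith : (0:ℝ) ≤ c-b)),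
        mul_nonneg (mul_nonneg (mul_nonneg (mul_nonneg ha.le ha.le) ha.le) hb.le) (sq_nonneg (c-b)),
        mul_pos (mul_pos (mul_pos (mul_pos (mul_pos ha ha) hb) hb) hb) (by linarith : (0:ℝ) < c-a),
        mul_nonneg (mul_nonneg (mul_nonneg (mul_nonneg ha.le ha.le) (mul_nonneg hb.le hb.le)) (by linarith : (0:ℝ) ≤ a+b-c)) (by linarith : (0:ℝ) ≤ c-a),
        mul_nonneg (mul_nonneg (mul_nonneg (mul_nonneg ha.le ha.le) hb.le) hc.le) (sq_nonneg (c-b)),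
        mul_nonneg (mul_nonneg (mul_nonneg ha.le ha.le) hb.le) (mul_nonneg (sq_nonneg (c-a)) (by linarith : (0:ℝ) ≤ c-b)),
        mul_nonneg (mul_nonneg (mul_nonneg (mul_nonneg ha.le hb.le) (mul_nonneg hb.le hb.le)) (by linarith : (0:ℝ) ≤ a+b-c)) (by linarith : (0:ℝ) ≤ c-a),
        mul_nonneg (mul_nonneg (mul_nonneg ha.le hb.le) (mul_nonneg hb.le hb.le)) (sq_nonneg (c-b)),
        mul_nonneg (mul_nonneg (mul_nonneg ha.le (mul_nonneg hb.le hb.le)) (by linarith : (0:ℝ) ≤ a+c-b)) (sq_nonneg (c-b)),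
        mul_nonneg (mul_nonneg (mul_nonneg ha.le hb.le) (mul_nonneg hc.le hc.le)) (mul_nonneg (by linarith : (0:ℝ) ≤ c-a) (by linarith : (0:ℝ) ≤ c-b)),
        mul_nonneg (mul_nonneg (mul_nonneg ha.le (mul_nonneg (mul_nonneg hc.le hc.le) hc.le)) (by linarith : (0:ℝ) ≤ a+c-b)) (by linarith : (0:ℝ) ≤ c-a),
        mul_nonneg (mul_nonneg (mul_nonneg (mul_nonneg hb.le hb.le) hb.le) hc.le) (mul_nonneg (by linarith : (0:ℝ) ≤ a+b-c) (by linarith : (0:ℝ) ≤ c-a)),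
        mul_nonneg (mul_nonneg (mul_nonneg (mul_nonneg hb.le hb.le) hc.le) hc.le) (mul_nonneg (by linarith : (0:ℝ) ≤ a+b-c) (by linarith : (0:ℝ) ≤ c-a))]
    · -- a = c
      have hbc : b ≠ c := by
        intro h'; exact hne ⟨heq.trans h'.symm, h'⟩
      have hcb : b < c := lt_of_le_of_ne hMb hbc
      rw [← heq] at hcb ⊢
      have h2 : 0 < (a-b)^2 := by
        have : b ≠ a := ne_of_lt hcb
        have := sub_ne_zero.2 (this.symm)
        positivity
      nlinarith [mul_pos (mul_pos (mul_pos (mul_pos ha ha) ha) hb) h2,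
        mul_pos (mul_pos (mul_pos ha hb) (mul_pos hb hb)) h2,
        mul_pos (mul_pos (mul_pos ha (mul_pos hb hb)) (by linarith : (0:ℝ) < 2*a-b)) h2]

lemma step_bound (u v w : ℂ) (M : ℝ) (hu : u ≠ 0) (hv : v ≠ 0) (hw : w ≠ 0)
    (hsum : u + v + w = 0)
    (hMa : ‖u‖ ≤ M) (hMb : ‖v‖ ≤ M) (hMc : ‖w‖ ≤ M)
    (hMeq : M = ‖u‖ ∨ M = ‖v‖ ∨ M = ‖w‖)
    (hne : ¬(‖u‖ = ‖v‖ ∧ ‖v‖ = ‖w‖)) :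
    ‖(2/3 : ℂ) * ((‖w‖ / ‖u‖ : ℝ) : ℂ) * u
      - (1/3 : ℂ) * ((‖u‖ / ‖v‖ : ℝ) : ℂ) * v
      - (1/3 : ℂ) * ((‖v‖ / ‖w‖ : ℝ) : ℂ) * w‖ < M := by
  have ha : 0 < ‖u‖ := norm_pos_iff.mpr hu
  have hb : 0 < ‖v‖ := norm_pos_iff.mpr hv
  have hc : 0 < ‖w‖ := norm_pos_iff.mpr hw
  set a := ‖u‖ with ha'
  set b := ‖v‖ with hb'
  set c := ‖w‖ with hc'
  have hM0 : 0 < M := by rcases hMeq with h|h|h <;> (rw [h]; positivity)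
  have hwuv : w = -u - v := by linear_combination hsum
  -- triangle inequalities
  have t2 : a ≤ b + c := by
    have : u = -(v + w) := by linear_combination hsum
    calc a = ‖v + w‖ := by rw [ha', this, norm_neg]
    _ ≤ b + c := norm_add_le v w
  have t3 : b ≤ a + c := by
    have : v = -(u + w) := by linear_combination hsum
    calc b = ‖u + w‖ := by rw [hb', this, norm_neg]
    _ ≤ a + c := norm_add_le u w
  have t1 : c ≤ a + b := by
    calc c = ‖u + v‖ := by rw [hc', hwuv]; rw [show -u - v = -(u+v) by ring, norm_neg]
    _ ≤ a + b := norm_add_le u v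
  set x := 2*(c/a) + b/c with hx
  set y := b/c - a/b with hy
  have ha0 : (a:ℂ) ≠ 0 := Complex.ofReal_ne_zero.mpr ha.ne'
  have hb0 : (b:ℂ) ≠ 0 := Complex.ofReal_ne_zero.mpr hb.ne'
  have hc0 : (c:ℂ) ≠ 0 := Complex.ofReal_ne_zero.mpr hc.ne'
  set T := ((x/3 : ℝ) : ℂ) * u + ((y/3 : ℝ) : ℂ) * v with hT
  have hexpr : (2/3 : ℂ) * ((c / a : ℝ) : ℂ) * u - (1/3 : ℂ) * ((a / b : ℝ) : ℂ) * v
      - (1/3 : ℂ) * ((b / c : ℝ) : ℂ) * w = T := by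
    rw [hT, hx, hy, hwuv]
    push_cast
    field_simp
    ring
  rw [hexpr]
  have ha2 : a^2 = u.re^2 + u.im^2 := by
    rw [ha', Complex.sq_norm, Complex.normSq_apply]; ring
  have hb2 : b^2 = v.re^2 + v.im^2 := by
    rw [hb', Complex.sq_norm, Complex.normSq_apply]; ring
  have hc2 : c^2 = (u.re + v.re)^2 + (u.im + v.im)^2 := by
    rw [hc', Complex.sq_norm, Complex.normSq_apply, hwuv]
    simp only [Complex.sub_re, Complex.sub_im, Complex.neg_re, Complex.neg_im]
    ring
  have hp : u.re*v.re + u.im*v.im = (c^2 - a^2 - b^2)/2 := by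
    rw [hc2, ha2, hb2]; ring
  have hT2 : (‖T‖)^2 = (x/3)^2*a^2 + (y/3)^2*b^2 + 2*(x/3)*(y/3)*((c^2-a^2-b^2)/2) := by
    rw [Complex.sq_norm, Complex.normSq_apply, hT]
    simp only [Complex.add_re, Complex.add_im, Complex.mul_re, Complex.mul_im,
      Complex.ofReal_re, Complex.ofReal_im]
    rw [← hp, ha2, hb2]
    ring
  have hs := scalar_key a b c M ha hb hc t2 t3 t1 hMa hMb hMc hMeq hne
  have hK : (0:ℝ) < 9*(a*b*c^2) := by positivity
  have hQ : (‖T‖)^2 * (9*(a*b*c^2))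
      = a*b*(2*c^2+a*b)^2 + a*b*(b^2-a*c)^2 + (2*c^2+a*b)*(b^2-a*c)*(c^2-a^2-b^2) := by
    rw [hT2, hx, hy]
    field_simp
    ring
  have hlt2 : (‖T‖)^2 < M^2 := by
    have h9 : (‖T‖)^2 * (9*(a*b*c^2)) < M^2 * (9*(a*b*c^2)) := by
      rw [hQ]; linarith [hs]
    exact (mul_lt_mul_iff_of_pos_right hK).mp h9
  exact lt_of_pow_lt_pow_left₀ 2 hM0.le hlt2

set_option maxHeartbeats 800000 in
/-- For a non-degenerate triangle with centroid at the origin whose vertex moduli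
are not all equal, the maximal distance from a vertex to the centroid strictly
decreases under the triangle transformation. -/
theorem triangle_transformation_max_strict_decrease (z : ZMod 3 → ℂ)
    (hinj : Function.Injective z) (h0 : ∀ i, z i ≠ 0)
    (hsum : z 0 + z 1 + z 2 = 0)
    (hne : ¬(‖z 0‖ = ‖z 1‖ ∧
        ‖z 1‖ = ‖z 2‖)) :
    max (max (‖triStep z 0‖) (‖triStep z 1‖))
        (‖triStep z 2‖)
      < max (max (‖z 0‖) (‖z 1‖)) (‖z 2‖) := by
  have h12 : z 1 + z 2 + z 0 = 0 := by linear_combination hsum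
  have h20 : z 2 + z 0 + z 1 = 0 := by linear_combination hsum
  set M := max (max (‖z 0‖) (‖z 1‖)) (‖z 2‖) with hM
  have hMa : ‖z 0‖ ≤ M := le_trans (le_max_left _ _) (le_max_left _ _)
  have hMb : ‖z 1‖ ≤ M := le_trans (le_max_right _ _) (le_max_left _ _)
  have hMc : ‖z 2‖ ≤ M := le_max_right _ _
  have hMeq : M = ‖z 0‖ ∨ M = ‖z 1‖ ∨ M = ‖z 2‖ := by
    rcases max_choice (max (‖z 0‖) (‖z 1‖)) (‖z 2‖) with h | h
    · rcases max_choice (‖z 0‖) (‖z 1‖) with h' | h'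
      · left; rw [hM, h, h']
      · right; left; rw [hM, h, h']
    · right; right; rw [hM, h]
  have hne1 : ¬(‖z 1‖ = ‖z 2‖ ∧ ‖z 2‖ = ‖z 0‖) :=
    fun ⟨p, q⟩ => hne ⟨q.symm.trans p.symm, p⟩
  have hne2 : ¬(‖z 2‖ = ‖z 0‖ ∧ ‖z 0‖ = ‖z 1‖) :=
    fun ⟨p, q⟩ => hne ⟨q, q.symm.trans p.symm⟩
  have e0 : triStep z 0 = (2/3 : ℂ) * ((‖z 2‖ / ‖z 0‖ : ℝ) : ℂ) * z 0
      - (1/3 : ℂ) * ((‖z 0‖ / ‖z 1‖ : ℝ) : ℂ) * z 1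
      - (1/3 : ℂ) * ((‖z 1‖ / ‖z 2‖ : ℝ) : ℂ) * z 2 := by
    simp only [triStep, triRatio]
    rw [show ((0:ZMod 3)+1) = 1 by decide, show ((0:ZMod 3)+2) = 2 by decide,
      show ((0:ZMod 3)-1) = 2 by decide, show ((1:ZMod 3)-1) = 0 by decide,
      show ((2:ZMod 3)-1) = 1 by decide]
  have e1 : triStep z 1 = (2/3 : ℂ) * ((‖z 0‖ / ‖z 1‖ : ℝ) : ℂ) * z 1
      - (1/3 : ℂ) * ((‖z 1‖ / ‖z 2‖ : ℝ) : ℂ) * z 2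
      - (1/3 : ℂ) * ((‖z 2‖ / ‖z 0‖ : ℝ) : ℂ) * z 0 := by
    simp only [triStep, triRatio]
    rw [show ((1:ZMod 3)+1) = 2 by decide, show ((1:ZMod 3)+2) = 0 by decide,
      show ((1:ZMod 3)-1) = 0 by decide, show ((2:ZMod 3)-1) = 1 by decide,
      show ((0:ZMod 3)-1) = 2 by decide]
  have e2 : triStep z 2 = (2/3 : ℂ) * ((‖z 1‖ / ‖z 2‖ : ℝ) : ℂ) * z 2
      - (1/3 : ℂ) * ((‖z 2‖ / ‖z 0‖ : ℝ) : ℂ) * z 0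
      - (1/3 : ℂ) * ((‖z 0‖ / ‖z 1‖ : ℝ) : ℂ) * z 1 := by
    simp only [triStep, triRatio]
    rw [show ((2:ZMod 3)+1) = 0 by decide, show ((2:ZMod 3)+2) = 1 by decide,
      show ((2:ZMod 3)-1) = 1 by decide, show ((0:ZMod 3)-1) = 2 by decide,
      show ((1:ZMod 3)-1) = 0 by decide]
  have b0 : ‖triStep z 0‖ < M := by
    rw [e0]
    exact step_bound (z 0) (z 1) (z 2) M (h0 0) (h0 1) (h0 2) hsum hMa hMb hMc hMeq hne
  have b1 : ‖triStep z 1‖ < M := by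
    rw [e1]
    exact step_bound (z 1) (z 2) (z 0) M (h0 1) (h0 2) (h0 0) h12 hMb hMc hMa (by tauto) hne1
  have b2 : ‖triStep z 2‖ < M := by
    rw [e2]
    exact step_bound (z 2) (z 0) (z 1) M (h0 2) (h0 0) (h0 1) h20 hMc hMa hMb (by tauto) hne2
  exact max_lt (max_lt b0 b1) b2
end

section
/- Characterization of fixed points of the triangle transformation: let z₀, z₁, z₂ ∈ ℂ be pairwise distinct and all nonzero with z₀ + z₁ + z₂ = 0. Then the triangle is a fixed point of the transformation (z′ᵢ = zᵢ for all i) if and only if the distances from the vertices to the centroid are all equal, i.e. |z₀| = |z₁| = |z₂|. -/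
private lemma abs3_zero {x y w : ℝ} (hs : x + y + w = 0) (h1 : |x| = |y|)
    (h2 : |y| = |w|) : x = 0 ∧ y = 0 ∧ w = 0 := by
  rcases abs_eq_abs.mp h1 with h | h <;> rcases abs_eq_abs.mp h2 with h' | h' <;>
    exact ⟨by linarith, by linarith, by linarith⟩

/-- A non-degenerate triangle with centroid at the origin is a fixed point of the
triangle transformation if and only if its vertices are equidistant from the
centroid. -/
theorem triangle_transformation_fixed_point_iff_equidistant (z : ZMod 3 → ℂ)
    (hinj : Function.Injective z) (h0 : ∀ i, z i ≠ 0)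
    (hsum : z 0 + z 1 + z 2 = 0) :
    (∀ i : ZMod 3, triStep z i = z i) ↔
      (‖z 0‖ = ‖z 1‖ ∧
        ‖z 1‖ = ‖z 2‖) := by
  have ha : ∀ j, (0:ℝ) < ‖z j‖ := fun j => norm_pos_iff.mpr (h0 j)
  constructor
  · intro h
    have key : ∀ i : ZMod 3,
        (((triRatio z i : ℝ) : ℂ) - 1) * z i
          = (((triRatio z (i + 1) : ℝ) : ℂ) - 1) * z (i + 1) := by
      intro i
      have h1 := h i
      have h2 := h (i + 1)
      rw [triStep] at h1 h2
      rw [show i + 1 + 1 = i + 2 by ring, show i + 1 + 2 = i by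
        have : (3 : ZMod 3) = 0 := by decide
        rw [show i + 1 + 2 = i + 3 by ring, this, add_zero]] at h2
      linear_combination h1 - h2
    have habs : ∀ x y : ℝ, 0 < y → |x / y - 1| * y = |x - y| := by
      intro x y hy
      rw [show x / y - 1 = (x - y) / y by field_simp, abs_div, abs_of_pos hy,
        div_mul_cancel₀ _ (ne_of_gt hy)]
    have keyabs : ∀ i : ZMod 3,
        |‖z (i - 1)‖ - ‖z i‖|
          = |‖z i‖ - ‖z (i + 1)‖| := by
      intro i
      have hc := congrArg norm (key i)
      rw [norm_mul, norm_mul,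
        show (((triRatio z i : ℝ) : ℂ) - 1) = ((triRatio z i - 1 : ℝ) : ℂ) by
          push_cast; ring,
        show (((triRatio z (i+1) : ℝ) : ℂ) - 1) = ((triRatio z (i+1) - 1 : ℝ) : ℂ) by
          push_cast; ring,
        Complex.norm_real, Complex.norm_real, Real.norm_eq_abs, Real.norm_eq_abs] at hc
      rw [triRatio, triRatio, show i + 1 - 1 = i by ring] at hc
      rw [habs _ _ (ha i), habs _ _ (ha (i+1))] at hc
      exact hc
    have k0 := keyabs 0
    have k1 := keyabs 1
    rw [show (0:ZMod 3) - 1 = 2 by decide, show (0:ZMod 3) + 1 = 1 by decide] at k0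
    rw [show (1:ZMod 3) - 1 = 0 by decide, show (1:ZMod 3) + 1 = 2 by decide] at k1
    obtain ⟨d0, d1, d2⟩ := abs3_zero
      (x := ‖z 2‖ - ‖z 0‖)
      (y := ‖z 0‖ - ‖z 1‖)
      (w := ‖z 1‖ - ‖z 2‖) (by ring) k0 k1
    exact ⟨by linarith, by linarith⟩
  · rintro ⟨h01, h12⟩
    have h20 : ‖z 2‖ = ‖z 0‖ := (h01.trans h12).symm
    have hr : ∀ j : ZMod 3, ((triRatio z j : ℝ) : ℂ) = 1 := by
      intro j
      have hj : j = 0 ∨ j = 1 ∨ j = 2 := by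
        rcases (by decide : ∀ k : ZMod 3, k = 0 ∨ k = 1 ∨ k = 2) j with h | h | h <;>
          simp [h]
      rcases hj with rfl | rfl | rfl
      · rw [triRatio, show (0:ZMod 3) - 1 = 2 by decide, h20,
          div_self (ne_of_gt (ha _))]; exact Complex.ofReal_one
      · rw [triRatio, show (1:ZMod 3) - 1 = 0 by decide, h01,
          div_self (ne_of_gt (ha _))]; exact Complex.ofReal_one
      · rw [triRatio, show (2:ZMod 3) - 1 = 1 by decide, h12,
          div_self (ne_of_gt (ha _))]; exact Complex.ofReal_one
    intro i
    rw [triStep, hr i, hr (i+1), hr (i+2)]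
    rcases (by decide : ∀ k : ZMod 3, k = 0 ∨ k = 1 ∨ k = 2) i with rfl | rfl | rfl
    · rw [show (0:ZMod 3) + 1 = 1 by decide, show (0:ZMod 3) + 2 = 2 by decide]
      linear_combination (-(1/3) : ℂ) * hsum
    · rw [show (1:ZMod 3) + 1 = 2 by decide, show (1:ZMod 3) + 2 = 0 by decide]
      linear_combination (-(1/3) : ℂ) * hsum
    · rw [show (2:ZMod 3) + 1 = 0 by decide, show (2:ZMod 3) + 2 = 1 by decide]
      linear_combination (-(1/3) : ℂ) * hsum
end

section
/- Let x₀, x₁, x₂, x₃ ∈ ℝ² be pairwise distinct points with x₀ + x₁ + x₂ + x₃ = 0 and ‖x₀‖ = ‖x₁‖ = ‖x₂‖ = ‖x₃‖. Then, up to a change of indices, the points form two antipodal pairs: (x₀ = −x₁ and x₂ = −x₃), or (x₀ = −x₂ and x₁ = −x₃), or (x₀ = −x₃ and x₁ = −x₂). -/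
lemma key_antipodal (a1 a2 b1 b2 c1 c2 d1 d2 : ℝ)
    (h1 : a1 + b1 + c1 + d1 = 0) (h2 : a2 + b2 + c2 + d2 = 0)
    (hab : a1^2 + a2^2 = b1^2 + b2^2)
    (hac : a1^2 + a2^2 = c1^2 + c2^2)
    (had : a1^2 + a2^2 = d1^2 + d2^2) :
    (a1 = -b1 ∧ a2 = -b2 ∧ c1 = -d1 ∧ c2 = -d2) ∨
    (a1 = -c1 ∧ a2 = -c2 ∧ b1 = -d1 ∧ b2 = -d2) ∨
    (a1 = -d1 ∧ a2 = -d2 ∧ b1 = -c1 ∧ b2 = -c2) := by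
  by_cases hs : a1 + b1 = 0 ∧ a2 + b2 = 0
  · exact Or.inl ⟨by linarith [hs.1], by linarith [hs.2], by linarith [hs.1], by linarith [hs.2]⟩
  · -- s = a+b ≠ 0
    have hd1 : (a1 - b1) * (a1 + b1) + (a2 - b2) * (a2 + b2) = 0 := by
      linear_combination hab
    have hd2 : (c1 - d1) * (a1 + b1) + (c2 - d2) * (a2 + b2) = 0 := by
      linear_combination (c1 - d1) * h1 + (c2 - d2) * h2 + hac - had
    have hcross : (a1 - b1) * (c2 - d2) - (a2 - b2) * (c1 - d1) = 0 := by
      have e1 : (a1 + b1) * ((a1 - b1) * (c2 - d2) - (a2 - b2) * (c1 - d1)) = 0 := by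
        linear_combination (c2 - d2) * hd1 - (a2 - b2) * hd2
      have e2 : (a2 + b2) * ((a1 - b1) * (c2 - d2) - (a2 - b2) * (c1 - d1)) = 0 := by
        linear_combination (a1 - b1) * hd2 - (c1 - d1) * hd1
      rcases not_and_or.mp hs with h | h
      · exact (mul_eq_zero.mp e1).resolve_left h
      · exact (mul_eq_zero.mp e2).resolve_left h
    have hnv : (c1 - d1)^2 + (c2 - d2)^2 = (a1 - b1)^2 + (a2 - b2)^2 := by
      linear_combination 2 * hab - 2 * hac - 2 * had
        - (c1 + d1 - a1 - b1) * h1 - (c2 + d2 - a2 - b2) * h2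
    have hip : ((a1 - b1) * (c1 - d1) + (a2 - b2) * (c2 - d2) - ((a1 - b1)^2 + (a2 - b2)^2)) *
        ((a1 - b1) * (c1 - d1) + (a2 - b2) * (c2 - d2) + ((a1 - b1)^2 + (a2 - b2)^2)) = 0 := by
      linear_combination ((a1 - b1)^2 + (a2 - b2)^2) * hnv
        - ((a1 - b1) * (c2 - d2) - (a2 - b2) * (c1 - d1)) * hcross
    rcases mul_eq_zero.mp hip with h | h
    · -- u = v : a - b = c - d, so a = -d, b = -c
      have hz : ((a1 - b1) - (c1 - d1))^2 + ((a2 - b2) - (c2 - d2))^2 = 0 := by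
        linear_combination hnv - 2 * h
      have z1 : (a1 - b1) - (c1 - d1) = 0 :=
        pow_eq_zero_iff two_ne_zero |>.mp
          (le_antisymm (by linarith [hz, sq_nonneg ((a2 - b2) - (c2 - d2))]) (sq_nonneg _))
      have z2 : (a2 - b2) - (c2 - d2) = 0 :=
        pow_eq_zero_iff two_ne_zero |>.mp
          (le_antisymm (by linarith [hz, sq_nonneg ((a1 - b1) - (c1 - d1))]) (sq_nonneg _))
      exact Or.inr (Or.inr ⟨by linarith, by linarith, by linarith, by linarith⟩)
    · -- u = -v : a - b = d - c, so a = -c, b = -d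
      have hz : ((a1 - b1) + (c1 - d1))^2 + ((a2 - b2) + (c2 - d2))^2 = 0 := by
        linear_combination hnv + 2 * h
      have z1 : (a1 - b1) + (c1 - d1) = 0 :=
        pow_eq_zero_iff two_ne_zero |>.mp
          (le_antisymm (by linarith [hz, sq_nonneg ((a2 - b2) + (c2 - d2))]) (sq_nonneg _))
      have z2 : (a2 - b2) + (c2 - d2) = 0 :=
        pow_eq_zero_iff two_ne_zero |>.mp
          (le_antisymm (by linarith [hz, sq_nonneg ((a1 - b1) + (c1 - d1))]) (sq_nonneg _))
      exact Or.inr (Or.inl ⟨by linarith, by linarith, by linarith, by linarith⟩)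

/-- Four pairwise distinct points in the plane with centroid at the origin and
equal distances to the origin form two antipodal pairs (up to a change of
indices). -/
theorem equidistant_quadrilateral_antipodal_pairs
    (x : Fin 4 → EuclideanSpace ℝ (Fin 2))
    (hinj : Function.Injective x)
    (hsum : x 0 + x 1 + x 2 + x 3 = 0)
    (hnorm : ‖x 0‖ = ‖x 1‖ ∧ ‖x 1‖ = ‖x 2‖ ∧ ‖x 2‖ = ‖x 3‖) :
    (x 0 = -x 1 ∧ x 2 = -x 3) ∨ (x 0 = -x 2 ∧ x 1 = -x 3) ∨
      (x 0 = -x 3 ∧ x 1 = -x 2) := by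
  have hnsq : ∀ y : EuclideanSpace ℝ (Fin 2), ‖y‖^2 = (y 0)^2 + (y 1)^2 := by
    intro y
    rw [EuclideanSpace.norm_eq, Real.sq_sqrt (by positivity)]
    simp [Fin.sum_univ_two, sq_abs]
  have hsc : ∀ j : Fin 2, x 0 j + x 1 j + x 2 j + x 3 j = 0 := by
    intro j
    have := congrArg (fun v => v j) hsum
    simpa using this
  have hab : ‖x 0‖^2 = ‖x 1‖^2 := by rw [hnorm.1]
  have hac : ‖x 0‖^2 = ‖x 2‖^2 := by rw [hnorm.1, hnorm.2.1]
  have had : ‖x 0‖^2 = ‖x 3‖^2 := by rw [hnorm.1, hnorm.2.1, hnorm.2.2]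
  rw [hnsq, hnsq] at hab hac had
  have := key_antipodal (x 0 0) (x 0 1) (x 1 0) (x 1 1) (x 2 0) (x 2 1) (x 3 0) (x 3 1)
    (hsc 0) (hsc 1) hab hac had
  have ext2 : ∀ y z : EuclideanSpace ℝ (Fin 2), y 0 = -z 0 → y 1 = -z 1 → y = -z := by
    intro y z h0 h1
    ext j
    have : (-z) j = -(z j) := rfl
    fin_cases j <;> simp_all
  rcases this with ⟨p1, p2, p3, p4⟩ | ⟨p1, p2, p3, p4⟩ | ⟨p1, p2, p3, p4⟩
  · exact Or.inl ⟨ext2 _ _ p1 p2, ext2 _ _ p3 p4⟩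
  · exact Or.inr (Or.inl ⟨ext2 _ _ p1 p2, ext2 _ _ p3 p4⟩)
  · exact Or.inr (Or.inr ⟨ext2 _ _ p1 p2, ext2 _ _ p3 p4⟩)
end
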